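/- Let I be a countably infinite set and let C = ⋃_{i∈I} C_i where the sets C_i are nonempty, pairwise disjoint, and sup_{i∈I} |C_i| < ω (i.e., the sizes are uniformly bounded by some natural number). If H is a filter on C each of whose elements intersects all but finitely many of the sets C_i, then H has an infinite pseudointersection, i.e., there exists an infinite set A ⊆ C such that A \ H is finite for every H ∈ H. -/
import Mathlib


open Set Filter

/-- If `C = ⋃ i, C i` with the `C i` nonempty, pairwise disjoint and of
uniformly bounded finite cardinality (indexed by a countably infinite set), and `H` is a
(proper) filter each of whose elements meets all but finitely many `C i`, then `H` has an
infinite pseudointersection contained in `C`. -/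
theorem stmt0 {ι α : Type*} [Countable ι] [Infinite ι] (C : ι → Set α)
    (hne : ∀ i, (C i).Nonempty) (hdisj : Pairwise (Function.onFun Disjoint C))
    (hbd : ∃ n : ℕ, ∀ i, (C i).Finite ∧ (C i).ncard ≤ n)
    (H : Filter α) [H.NeBot]
    (hmeet : ∀ S ∈ H, {i : ι | (S ∩ C i).Nonempty}ᶜ.Finite) :
    ∃ A : Set α, A ⊆ ⋃ i, C i ∧ A.Infinite ∧ ∀ S ∈ H, (A \ S).Finite := by
  classical
  obtain ⟨n, hbd⟩ := hbd
  set P : ℕ → Prop := fun m =>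
    ∃ S ∈ H, {i : ι | 1 ≤ (S ∩ C i).ncard ∧ (S ∩ C i).ncard ≤ m}.Infinite with hPdef
  have hPn : P n := by
    refine ⟨univ, univ_mem, ?_⟩
    have heq : {i : ι | 1 ≤ ((univ : Set α) ∩ C i).ncard ∧ ((univ : Set α) ∩ C i).ncard ≤ n}
        = univ := by
      ext i
      simp only [univ_inter, mem_setOf_eq, mem_univ, iff_true]
      exact ⟨(Set.ncard_pos (hbd i).1).2 (hne i), (hbd i).2⟩
    rw [heq]
    exact infinite_univ
  have hex : ∃ m, P m := ⟨n, hPn⟩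
  obtain ⟨S₀, hS₀, hJ⟩ := Nat.find_spec hex
  set m := Nat.find hex with hm
  set J := {i : ι | 1 ≤ (S₀ ∩ C i).ncard ∧ (S₀ ∩ C i).ncard ≤ m} with hJdef
  have hJinf : J.Infinite := hJ
  have hm1 : 1 ≤ m := by
    obtain ⟨i, hi⟩ := hJinf.nonempty
    exact le_trans hi.1 hi.2
  refine ⟨⋃ i ∈ J, S₀ ∩ C i, ?_, ?_, ?_⟩
  · intro x hx
    simp only [mem_iUnion] at hx
    obtain ⟨i, _, hx⟩ := hx
    exact mem_iUnion.2 ⟨i, hx.2⟩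
  · have : Infinite J := hJinf.to_subtype
    have hne' : ∀ i : J, (S₀ ∩ C (i : ι)).Nonempty := fun i =>
      (Set.ncard_pos ((hbd i).1.inter_of_right _)).1 i.2.1
    choose f hf using hne'
    have hinj : Function.Injective f := by
      intro i j hij
      by_contra hne2
      have hij' : (i : ι) ≠ (j : ι) := fun h => hne2 (Subtype.ext h)
      exact (hdisj hij').le_bot ⟨(hf i).2, hij ▸ (hf j).2⟩
    exact Set.infinite_of_injective_forall_mem hinj
      (fun i => mem_iUnion₂.2 ⟨i, i.2, hf i⟩)
  · intro S hS
    have hTH : S ∩ S₀ ∈ H := inter_mem hS hS₀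
    set T := S ∩ S₀ with hTdef
    set J' := {i : ι | i ∈ J ∧ ¬ (S₀ ∩ C i ⊆ S)} with hJ'def
    have hJ'fin : J'.Finite := by
      by_contra hinf
      have hinf' : J'.Infinite := hinf
      have hK : (J' \ {i : ι | (T ∩ C i).Nonempty}ᶜ).Infinite :=
        hinf'.diff (hmeet T hTH)
      have hPm : P (m - 1) := by
        refine ⟨T, hTH, hK.mono ?_⟩
        rintro i ⟨⟨hiJ, hns⟩, hnee⟩
        rw [mem_compl_iff, not_not] at hnee
        have hfinCi := (hbd i).1
        have hsub : T ∩ C i ⊂ S₀ ∩ C i := by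
          constructor
          · rintro x ⟨hxT, hxC⟩
            exact ⟨hxT.2, hxC⟩
          · intro hcon
            obtain ⟨x, hx, hxS⟩ := not_subset.1 hns
            exact hxS (hcon hx).1.1
        have hlt : (T ∩ C i).ncard < (S₀ ∩ C i).ncard :=
          Set.ncard_lt_ncard hsub (hfinCi.inter_of_right _)
        refine ⟨(Set.ncard_pos (hfinCi.inter_of_right _)).2 hnee, ?_⟩
        have := hiJ.2
        omega
      exact Nat.find_min hex (by omega) hPm
    have hsub : (⋃ i ∈ J, S₀ ∩ C i) \ S ⊆ ⋃ i ∈ J', S₀ ∩ C i := by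
      rintro x ⟨hx, hxS⟩
      simp only [mem_iUnion] at hx ⊢
      obtain ⟨i, hiJ, hxi⟩ := hx
      refine ⟨i, ⟨hiJ, fun h => hxS (h hxi)⟩, hxi⟩
    exact (hJ'fin.biUnion (fun i _ => (hbd i).1.inter_of_right _)).subset hsub
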